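/- arXiv:1811.08257 — 2 statements merged into one kernel-verified Lean document; each statement's English description precedes it below -/
import Mathlib

section
/- Let K ≥ 2, l ≥ 1, and real numbers x_1,…,x_K with x_t = max_k x_k. Define p_t = e^{x_t} / Σ_{k=1}^K e^{x_k} and p_t' = e^{x_t} / Σ_{k : x_k ≥ x_t − m} e^{x_k}. If m ≥ ln((10^l − 1)(K − 1)), then |p_t − p_t'| ≤ 10^{−l}. -/
open Finset

theorem softmax_truncation (K l : ℕ) (hK : 2 ≤ K) (hl : 1 ≤ l)
    (x : Fin K → ℝ) (t : Fin K) (ht : ∀ k, x k ≤ x t)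
    (m : ℝ) (hm : Real.log (((10 : ℝ) ^ l - 1) * ((K : ℝ) - 1)) ≤ m) :
    |Real.exp (x t) / ∑ k, Real.exp (x k) -
      Real.exp (x t) / ∑ k ∈ Finset.univ.filter (fun k => x t - m ≤ x k), Real.exp (x k)|
      ≤ (10 : ℝ) ^ (-(l : ℤ)) := by
  set Q : ℝ := (10 : ℝ) ^ l with hQdef
  have hQ : (10 : ℝ) ≤ Q := by
    calc (10 : ℝ) = 10 ^ 1 := (pow_one _).symm
    _ ≤ Q := pow_le_pow_right₀ (by norm_num) hl
  have hK1 : (1 : ℝ) ≤ (K : ℝ) - 1 := by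
    have : (2 : ℝ) ≤ (K : ℝ) := by exact_mod_cast hK
    linarith
  set P : ℝ := (Q - 1) * ((K : ℝ) - 1) with hPdef
  have hP : (9 : ℝ) ≤ P := by
    calc (9 : ℝ) = 9 * 1 := by ring
    _ ≤ (Q - 1) * ((K : ℝ) - 1) := by
        apply mul_le_mul (by linarith) hK1 (by norm_num) (by linarith)
  have hεP : Real.exp (-m) * P ≤ 1 := by
    have hPm : P ≤ Real.exp m := by
      have := (Real.log_le_iff_le_exp (by linarith : (0:ℝ) < P)).mp hm
      exact this
    calc Real.exp (-m) * P ≤ Real.exp (-m) * Real.exp m :=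
          mul_le_mul_of_nonneg_left hPm (Real.exp_nonneg _)
    _ = 1 := by rw [← Real.exp_add]; simp
  have hm0 : 0 ≤ m := le_trans (Real.log_nonneg (by linarith)) hm
  set s := Finset.univ.filter (fun k => x t - m ≤ x k) with hs
  have hts : t ∈ s := by
    simp [hs]; linarith
  set e := Real.exp (x t) with he
  set A : ℝ := ∑ k ∈ s, Real.exp (x k) with hA
  set B : ℝ := ∑ k ∈ Finset.univ.filter (fun k => ¬ (x t - m ≤ x k)), Real.exp (x k) with hB
  have hsum : (∑ k, Real.exp (x k)) = A + B := by
    rw [hA, hB, Finset.sum_filter_add_sum_filter_not]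
  have heA : e ≤ A := Finset.single_le_sum (fun k _ => (Real.exp_nonneg _)) hts
  have he0 : 0 < e := Real.exp_pos _
  have hB0 : 0 ≤ B := Finset.sum_nonneg fun k _ => Real.exp_nonneg _
  have hBle : B ≤ ((K : ℝ) - 1) * (e * Real.exp (-m)) := by
    have hcard : ((Finset.univ.filter (fun k => ¬ (x t - m ≤ x k))).card : ℝ) ≤ (K : ℝ) - 1 := by
      have hsub : Finset.univ.filter (fun k => ¬ (x t - m ≤ x k)) ⊆ Finset.univ.erase t := by
        intro k hk
        simp only [Finset.mem_filter, Finset.mem_univ, true_and, not_le] at hk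
        refine Finset.mem_erase.mpr ⟨?_, Finset.mem_univ _⟩
        intro hkt; subst hkt; linarith
      have := Finset.card_le_card hsub
      have hcK : (Finset.univ.erase t).card = K - 1 := by
        rw [Finset.card_erase_of_mem (Finset.mem_univ _), Finset.card_univ, Fintype.card_fin]
      rw [hcK] at this
      have : ((Finset.univ.filter (fun k => ¬ (x t - m ≤ x k))).card : ℝ) ≤ ((K - 1 : ℕ) : ℝ) := by
        exact_mod_cast this
      calc ((Finset.univ.filter (fun k => ¬ (x t - m ≤ x k))).card : ℝ) ≤ ((K - 1 : ℕ) : ℝ) := this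
      _ = (K : ℝ) - 1 := by
          have : (1 : ℕ) ≤ K := by omega
          push_cast [Nat.cast_sub this]; ring
    have hterm : ∀ k ∈ Finset.univ.filter (fun k => ¬ (x t - m ≤ x k)),
        Real.exp (x k) ≤ e * Real.exp (-m) := by
      intro k hk
      simp only [Finset.mem_filter, not_le] at hk
      rw [he, ← Real.exp_add]
      exact Real.exp_le_exp.mpr (by linarith [hk.2])
    calc B ≤ ((Finset.univ.filter (fun k => ¬ (x t - m ≤ x k))).card : ℝ) * (e * Real.exp (-m)) := by
          rw [hB]
          exact Finset.sum_le_card_nsmul _ _ _ hterm |>.trans_eq (by simp [nsmul_eq_mul])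
    _ ≤ ((K : ℝ) - 1) * (e * Real.exp (-m)) := by
          apply mul_le_mul_of_nonneg_right hcard (by positivity)
  have hBQ : B * (Q - 1) ≤ e := by
    have : B * (Q - 1) ≤ ((K : ℝ) - 1) * (e * Real.exp (-m)) * (Q - 1) :=
      mul_le_mul_of_nonneg_right hBle (by linarith)
    have heq : ((K : ℝ) - 1) * (e * Real.exp (-m)) * (Q - 1) = e * (Real.exp (-m) * P) := by
      rw [hPdef]; ring
    rw [heq] at this
    calc B * (Q - 1) ≤ e * (Real.exp (-m) * P) := this
    _ ≤ e * 1 := mul_le_mul_of_nonneg_left hεP he0.le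
    _ = e := mul_one e
  have hA0 : 0 < A := lt_of_lt_of_le he0 heA
  have hS0 : 0 < A + B := by linarith
  rw [hsum]
  have habs : e / (A + B) - e / A ≤ 0 := by
    have : e / (A + B) ≤ e / A := div_le_div_of_nonneg_left he0.le hA0 (by linarith)
    linarith
  rw [abs_of_nonpos habs, neg_sub]
  have hgoal : e / A - e / (A + B) ≤ Q⁻¹ := by
    rw [div_sub_div _ _ (ne_of_gt hA0) (ne_of_gt hS0), div_le_iff₀ (by positivity),
      inv_mul_eq_div, le_div_iff₀ (by positivity : (0:ℝ) < Q)]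
    nlinarith [mul_nonneg (sub_nonneg.2 heA) hS0.le, mul_le_mul_of_nonneg_left hBQ he0.le]
  calc e / A - e / (A + B) ≤ Q⁻¹ := hgoal
  _ = (10 : ℝ) ^ (-(l : ℤ)) := by
      rw [zpow_neg, zpow_natCast]
end

section
/- Let l ≥ 1, s_1 ≥ 0, s_2 ≥ 1 be reals with s_1 + s_2 = K − 1 for some K ≥ 2. The expression ln( sqrt( ((10^l − 1)²·s_2 − 4·10^l·s_1)·s_2 / 4 ) + ((10^l − 1)·s_2 − 2·s_1)/2 ), viewed as a function of (s_1, s_2) subject to s_1 + s_2 = K − 1, s_1 ≥ 0, is maximized at s_1 = 0, s_2 = K − 1, where its value equals ln((10^l − 1)(K − 1)). -/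
theorem m_bound_maximized (l : ℝ) (hl : 1 ≤ l) (K : ℕ) (hK : 2 ≤ K)
    (s1 s2 : ℝ) (hs1 : 0 ≤ s1) (hs2 : 1 ≤ s2) (hsum : s1 + s2 = (K : ℝ) - 1)
    (hsqrt : 0 ≤ ((((10 : ℝ) ^ l - 1) ^ 2 * s2 - 4 * (10 : ℝ) ^ l * s1) * s2) / 4) :
    Real.log (Real.sqrt (((((10 : ℝ) ^ l - 1) ^ 2 * s2 - 4 * (10 : ℝ) ^ l * s1) * s2) / 4) +
        (((10 : ℝ) ^ l - 1) * s2 - 2 * s1) / 2) ≤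
      Real.log (((10 : ℝ) ^ l - 1) * ((K : ℝ) - 1)) ∧
    Real.log (Real.sqrt (((((10 : ℝ) ^ l - 1) ^ 2 * ((K : ℝ) - 1) - 4 * (10 : ℝ) ^ l * 0) *
          ((K : ℝ) - 1)) / 4) +
        (((10 : ℝ) ^ l - 1) * ((K : ℝ) - 1) - 2 * 0) / 2) =
      Real.log (((10 : ℝ) ^ l - 1) * ((K : ℝ) - 1)) := by
  have h10 : (10 : ℝ) ≤ (10 : ℝ) ^ l := by
    calc (10 : ℝ) = (10 : ℝ) ^ (1 : ℝ) := (Real.rpow_one 10).symm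
    _ ≤ (10 : ℝ) ^ l := Real.rpow_le_rpow_of_exponent_le (by norm_num) hl
  have hK1 : (1 : ℝ) ≤ (K : ℝ) - 1 := by
    have : (2 : ℝ) ≤ (K : ℝ) := by exact_mod_cast hK
    linarith
  revert hsqrt
  generalize (10 : ℝ) ^ l = b at h10 ⊢
  intro hsqrt
  have hb : (9 : ℝ) ≤ b - 1 := by linarith
  have ha : (0 : ℝ) < b - 1 := by linarith
  constructor
  · -- inequality part
    have hkey : 4 * b * s1 ≤ (b - 1) ^ 2 * s2 := by
      by_contra h
      push_neg at h
      have ht : (b - 1) ^ 2 * s2 - 4 * b * s1 < 0 := by linarith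
      have h2 : ((b - 1) ^ 2 * s2 - 4 * b * s1) * (s2 - 1) ≤ 0 :=
        mul_nonpos_of_nonpos_of_nonneg ht.le (by linarith)
      nlinarith
    have hX : (((b - 1) ^ 2 * s2 - 4 * b * s1) * s2) / 4 ≤ ((b - 1) * s2 / 2) ^ 2 := by
      nlinarith [mul_nonneg (mul_nonneg (by linarith : (0:ℝ) ≤ 4 * b) hs1) (by linarith : (0:ℝ) ≤ s2)]
    have hsq : Real.sqrt ((((b - 1) ^ 2 * s2 - 4 * b * s1) * s2) / 4) ≤ (b - 1) * s2 / 2 := by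
      have h1 : (0 : ℝ) ≤ (b - 1) * s2 / 2 := by nlinarith
      calc Real.sqrt ((((b - 1) ^ 2 * s2 - 4 * b * s1) * s2) / 4)
          ≤ Real.sqrt (((b - 1) * s2 / 2) ^ 2) := Real.sqrt_le_sqrt hX
        _ = (b - 1) * s2 / 2 := Real.sqrt_sq h1
    have hs : 0 < (b - 1) * s2 - 2 * s1 := by
      nlinarith [mul_pos (mul_pos ha ha) (by linarith : (0:ℝ) < s2),
        mul_pos ha (by linarith : (0:ℝ) < s2)]
    have hpos : 0 < Real.sqrt ((((b - 1) ^ 2 * s2 - 4 * b * s1) * s2) / 4) +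
        ((b - 1) * s2 - 2 * s1) / 2 := by
      have := Real.sqrt_nonneg ((((b - 1) ^ 2 * s2 - 4 * b * s1) * s2) / 4)
      linarith
    apply Real.log_le_log hpos
    have h3 : (b - 1) * s2 ≤ (b - 1) * ((K : ℝ) - 1) := by nlinarith
    linarith
  · -- equality part
    have h2 : ((b - 1) ^ 2 * ((K : ℝ) - 1) - 4 * b * 0) * ((K : ℝ) - 1) / 4 =
        ((b - 1) * ((K : ℝ) - 1) / 2) ^ 2 := by ring
    rw [h2, Real.sqrt_sq (by nlinarith)]
    congr 1
    ring
end
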